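/- Let D ⊆ ℂ be open and let Φ, Φ⁺ : D → Matrix (Fin N) (Fin N) ℂ be real-differentiable matrix functions and B : D → Matrix (Fin N) (Fin N) ℂ such that ∂_z̄ Φ + B·conj(Φ) = 0 and ∂_z Φ⁺ − conj(Φ⁺)·B = 0 on D. Then the matrix identity ∂_z (Φ⁺ · conj(Φ)) = − ∂_z̄ (conj(Φ⁺) · Φ) holds on D (i.e. the matrix-valued 1-form Φ⁺·conj(Φ) dz̄ − conj(Φ⁺)·Φ dz is closed). -/

import Mathlib

open Complex Matrix

/-- Entrywise Wirtinger derivative ∂_z f = (1/2)(∂f/∂x − i ∂f/∂y). -/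
noncomputable def wDz {N : ℕ} (f : ℂ → Matrix (Fin N) (Fin N) ℂ) (z : ℂ) :
    Matrix (Fin N) (Fin N) ℂ :=
  Matrix.of fun i j =>
    (1 / 2 : ℂ) * (fderiv ℝ (fun w => f w i j) z 1
      - Complex.I * fderiv ℝ (fun w => f w i j) z Complex.I)

/-- Entrywise Wirtinger derivative ∂_z̄ f = (1/2)(∂f/∂x + i ∂f/∂y). -/
noncomputable def wDzbar {N : ℕ} (f : ℂ → Matrix (Fin N) (Fin N) ℂ) (z : ℂ) :
    Matrix (Fin N) (Fin N) ℂ :=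
  Matrix.of fun i j =>
    (1 / 2 : ℂ) * (fderiv ℝ (fun w => f w i j) z 1
      + Complex.I * fderiv ℝ (fun w => f w i j) z Complex.I)

/-- Real-differentiability, entrywise, at every point of `D`. -/
def MatDiffOn {N : ℕ} (f : ℂ → Matrix (Fin N) (Fin N) ℂ) (D : Set ℂ) : Prop :=
  ∀ z ∈ D, ∀ i j, DifferentiableAt ℝ (fun w => f w i j) z

/-- Entrywise complex conjugate of a matrix. -/
def mconj {N : ℕ} (M : Matrix (Fin N) (Fin N) ℂ) : Matrix (Fin N) (Fin N) ℂ :=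
  M.map (starRingEnd ℂ)


noncomputable def sdz (u : ℂ → ℂ) (z : ℂ) : ℂ :=
  (1 / 2 : ℂ) * (fderiv ℝ u z 1 - Complex.I * fderiv ℝ u z Complex.I)

noncomputable def sdzb (u : ℂ → ℂ) (z : ℂ) : ℂ :=
  (1 / 2 : ℂ) * (fderiv ℝ u z 1 + Complex.I * fderiv ℝ u z Complex.I)

lemma sdz_mul {u v : ℂ → ℂ} {z : ℂ} (hu : DifferentiableAt ℝ u z)
    (hv : DifferentiableAt ℝ v z) :
    sdz (fun w => u w * v w) z = sdz u z * v z + u z * sdz v z := by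
  simp only [sdz, fderiv_fun_mul hu hv, ContinuousLinearMap.add_apply,
    ContinuousLinearMap.smul_apply, smul_eq_mul]
  ring

lemma sdzb_mul {u v : ℂ → ℂ} {z : ℂ} (hu : DifferentiableAt ℝ u z)
    (hv : DifferentiableAt ℝ v z) :
    sdzb (fun w => u w * v w) z = sdzb u z * v z + u z * sdzb v z := by
  simp only [sdzb, fderiv_fun_mul hu hv, ContinuousLinearMap.add_apply,
    ContinuousLinearMap.smul_apply, smul_eq_mul]
  ring

lemma sdz_conj {u : ℂ → ℂ} {z : ℂ} (hu : DifferentiableAt ℝ u z) :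
    sdz (fun w => starRingEnd ℂ (u w)) z = starRingEnd ℂ (sdzb u z) := by
  have h : fderiv ℝ (fun w => starRingEnd ℂ (u w)) z
      = (Complex.conjCLE.toContinuousLinearMap).comp (fderiv ℝ u z) :=
    ((Complex.conjCLE.toContinuousLinearMap.hasFDerivAt).comp z hu.hasFDerivAt).fderiv
  simp only [sdz, sdzb, h, ContinuousLinearMap.coe_comp', Function.comp_apply,
    ContinuousLinearEquiv.coe_coe, Complex.conjCLE_apply]
  simp only [_root_.map_mul, map_add, map_sub, Complex.conj_I, map_div₀, _root_.map_one, map_ofNat]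
  ring

lemma sdzb_conj {u : ℂ → ℂ} {z : ℂ} (hu : DifferentiableAt ℝ u z) :
    sdzb (fun w => starRingEnd ℂ (u w)) z = starRingEnd ℂ (sdz u z) := by
  have h : fderiv ℝ (fun w => starRingEnd ℂ (u w)) z
      = (Complex.conjCLE.toContinuousLinearMap).comp (fderiv ℝ u z) :=
    ((Complex.conjCLE.toContinuousLinearMap.hasFDerivAt).comp z hu.hasFDerivAt).fderiv
  simp only [sdz, sdzb, h, ContinuousLinearMap.coe_comp', Function.comp_apply,
    ContinuousLinearEquiv.coe_coe, Complex.conjCLE_apply]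
  simp only [_root_.map_mul, map_add, map_sub, Complex.conj_I, map_div₀, _root_.map_one, map_ofNat]
  ring

lemma sdz_sum {ι : Type*} (s : Finset ι) {u : ι → ℂ → ℂ} {z : ℂ}
    (h : ∀ k ∈ s, DifferentiableAt ℝ (u k) z) :
    sdz (fun w => ∑ k ∈ s, u k w) z = ∑ k ∈ s, sdz (u k) z := by
  simp only [sdz, fderiv_fun_sum h, ContinuousLinearMap.coe_sum', Finset.sum_apply,
    Finset.mul_sum]
  rw [← Finset.sum_sub_distrib, Finset.mul_sum]

lemma sdzb_sum {ι : Type*} (s : Finset ι) {u : ι → ℂ → ℂ} {z : ℂ}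
    (h : ∀ k ∈ s, DifferentiableAt ℝ (u k) z) :
    sdzb (fun w => ∑ k ∈ s, u k w) z = ∑ k ∈ s, sdzb (u k) z := by
  simp only [sdzb, fderiv_fun_sum h, ContinuousLinearMap.coe_sum', Finset.sum_apply,
    Finset.mul_sum]
  rw [← Finset.sum_add_distrib, Finset.mul_sum]


lemma wDz_apply {N : ℕ} (f : ℂ → Matrix (Fin N) (Fin N) ℂ) (z : ℂ) (i j : Fin N) :
    wDz f z i j = sdz (fun w => f w i j) z := rfl

lemma wDzbar_apply {N : ℕ} (f : ℂ → Matrix (Fin N) (Fin N) ℂ) (z : ℂ) (i j : Fin N) :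
    wDzbar f z i j = sdzb (fun w => f w i j) z := rfl

lemma wDz_mul {N : ℕ} {f g : ℂ → Matrix (Fin N) (Fin N) ℂ} {z : ℂ}
    (hf : ∀ i j, DifferentiableAt ℝ (fun w => f w i j) z)
    (hg : ∀ i j, DifferentiableAt ℝ (fun w => g w i j) z) :
    wDz (fun w => f w * g w) z = wDz f z * g z + f z * wDz g z := by
  ext i j
  have he : (fun w => (f w * g w) i j) = fun w => ∑ k, f w i k * g w k j := by
    funext w; simp [Matrix.mul_apply]
  rw [wDz_apply, he, sdz_sum _ (fun k _ => (hf i k).fun_mul (hg k j))]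
  simp only [Matrix.add_apply, Matrix.mul_apply, wDz_apply]
  rw [← Finset.sum_add_distrib]
  exact Finset.sum_congr rfl fun k _ => sdz_mul (hf i k) (hg k j)

lemma wDzbar_mul {N : ℕ} {f g : ℂ → Matrix (Fin N) (Fin N) ℂ} {z : ℂ}
    (hf : ∀ i j, DifferentiableAt ℝ (fun w => f w i j) z)
    (hg : ∀ i j, DifferentiableAt ℝ (fun w => g w i j) z) :
    wDzbar (fun w => f w * g w) z = wDzbar f z * g z + f z * wDzbar g z := by
  ext i j
  have he : (fun w => (f w * g w) i j) = fun w => ∑ k, f w i k * g w k j := by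
    funext w; simp [Matrix.mul_apply]
  rw [wDzbar_apply, he, sdzb_sum _ (fun k _ => (hf i k).fun_mul (hg k j))]
  simp only [Matrix.add_apply, Matrix.mul_apply, wDzbar_apply]
  rw [← Finset.sum_add_distrib]
  exact Finset.sum_congr rfl fun k _ => sdzb_mul (hf i k) (hg k j)

lemma mconj_apply {N : ℕ} (M : Matrix (Fin N) (Fin N) ℂ) (i j : Fin N) :
    mconj M i j = starRingEnd ℂ (M i j) := rfl

lemma diff_mconj {N : ℕ} {f : ℂ → Matrix (Fin N) (Fin N) ℂ} {z : ℂ}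
    (hf : ∀ i j, DifferentiableAt ℝ (fun w => f w i j) z) :
    ∀ i j, DifferentiableAt ℝ (fun w => mconj (f w) i j) z := fun i j =>
  (Complex.conjCLE.toContinuousLinearMap.differentiableAt).comp z (hf i j)

lemma wDz_mconj {N : ℕ} {f : ℂ → Matrix (Fin N) (Fin N) ℂ} {z : ℂ}
    (hf : ∀ i j, DifferentiableAt ℝ (fun w => f w i j) z) :
    wDz (fun w => mconj (f w)) z = mconj (wDzbar f z) := by
  ext i j
  rw [wDz_apply, mconj_apply, wDzbar_apply]
  exact sdz_conj (hf i j)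

lemma wDzbar_mconj {N : ℕ} {f : ℂ → Matrix (Fin N) (Fin N) ℂ} {z : ℂ}
    (hf : ∀ i j, DifferentiableAt ℝ (fun w => f w i j) z) :
    wDzbar (fun w => mconj (f w)) z = mconj (wDz f z) := by
  ext i j
  rw [wDzbar_apply, mconj_apply, wDz_apply]
  exact sdzb_conj (hf i j)

lemma mconj_mul {N : ℕ} (A C : Matrix (Fin N) (Fin N) ℂ) :
    mconj (A * C) = mconj A * mconj C := by
  simp [mconj, Matrix.map_mul]

lemma mconj_mconj {N : ℕ} (A : Matrix (Fin N) (Fin N) ℂ) : mconj (mconj A) = A := by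
  ext i j; simp [mconj]

lemma mconj_neg {N : ℕ} (A : Matrix (Fin N) (Fin N) ℂ) : mconj (-A) = -mconj A := by
  ext i j; simp [mconj]

/-- if ∂_z̄ Φ + B·conj Φ = 0 and ∂_z Φ⁺ − conj(Φ⁺)·B = 0 on an open set D,
then ∂_z (Φ⁺ · conj Φ) = − ∂_z̄ (conj(Φ⁺) · Φ) on D. -/
theorem moutard_closedness {N : ℕ} (D : Set ℂ) (hD : IsOpen D)
    (Φ Φp B : ℂ → Matrix (Fin N) (Fin N) ℂ)
    (hΦ : MatDiffOn Φ D) (hΦp : MatDiffOn Φp D)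
    (hsys : ∀ z ∈ D, wDzbar Φ z + B z * mconj (Φ z) = 0)
    (hconj : ∀ z ∈ D, wDz Φp z - mconj (Φp z) * B z = 0) :
    ∀ z ∈ D, wDz (fun w => Φp w * mconj (Φ w)) z
      = - wDzbar (fun w => mconj (Φp w) * Φ w) z := by
  intro z hz
  have e1 : wDzbar Φ z = -(B z * mconj (Φ z)) := by
    have := hsys z hz; linear_combination (norm := abel) this
  have e2 : wDz Φp z = mconj (Φp z) * B z := sub_eq_zero.mp (hconj z hz)
  have hΦd := hΦ z hz
  have hΦpd := hΦp z hz
  rw [wDz_mul hΦpd (diff_mconj hΦd), wDzbar_mul (diff_mconj hΦpd) hΦd,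
    wDz_mconj hΦd, wDzbar_mconj hΦpd, e1, e2, mconj_neg, mconj_mul, mconj_mul,
    mconj_mconj, mconj_mconj]
  simp only [mul_neg, neg_add, neg_neg, mul_assoc]
  abel
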